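/- Let p be a prime, R → A a homomorphism of F_p-algebras, B an A-algebra, π : C → B a surjective R-algebra homomorphism with kernel b satisfying b^[p] = 0 (i.e. x^p = 0 for all x ∈ b and the ideal generated by p-th powers of b is zero). Then any two R-algebra homomorphisms A → C lifting the structure map A → B are equal, provided the relative Frobenius A ⊗_R F_*R → F_*A is surjective. -/

import Mathlib

open TensorProduct

/-- `FStar p R` is `R` viewed as an `R`-algebra via the Frobenius `r ↦ r ^ p`. -/
def FStar (_p : ℕ) (R : Type*) : Type _ := R

instance (p : ℕ) (R : Type*) [CommRing R] : CommRing (FStar p R) :=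
  inferInstanceAs (CommRing R)

noncomputable instance (p : ℕ) (R A : Type*) [CommRing R] [CommRing A] [Algebra R A]
    [ExpChar A p] : Algebra R (FStar p A) :=
  ((frobenius A p).comp (algebraMap R A)).toAlgebra

/-- Frobenius of `A`, as a map `A →ₐ[R] FStar p A`. -/
noncomputable def frobAlgHom (p : ℕ) (R A : Type*) [CommRing R] [CommRing A] [Algebra R A]
    [ExpChar A p] : A →ₐ[R] FStar p A :=
  { frobenius A p with commutes' := fun _ => rfl }

/-- The structure map `F_*R → F_*A`, as a map of `R`-algebras. -/
noncomputable def fstarAlgHom (p : ℕ) (R A : Type*) [CommRing R] [CommRing A] [Algebra R A]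
    [ExpChar R p] [ExpChar A p] : FStar p R →ₐ[R] FStar p A :=
  { (algebraMap R A : R →+* A) with
    commutes' := fun r => by
      show (algebraMap R A) (frobenius R p (algebraMap R R r)) = frobenius A p (algebraMap R A r)
      simp [frobenius_def, map_pow] }

/-- The relative Frobenius `A ⊗[R] F_*R → F_*A`, `a ⊗ r ↦ a^p · r`. -/
noncomputable def relFrob (p : ℕ) (R A : Type*) [CommRing R] [CommRing A] [Algebra R A]
    [ExpChar R p] [ExpChar A p] : (A ⊗[R] FStar p R) →ₐ[R] FStar p A :=
  Algebra.TensorProduct.productMap (frobAlgHom p R A) (fstarAlgHom p R A)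

/-- if the relative Frobenius of `R → A` is surjective, then any two `R`-algebra
lifts `A → C` of the structure map `A → B` along a surjection `π : C → B` whose kernel `b`
satisfies `b^[p] = 0` are equal. -/
theorem stmt_1 (p : ℕ) [Fact p.Prime] (R A B C : Type*) [CommRing R] [CommRing A] [CommRing B]
    [CommRing C] [Algebra R A] [Algebra R B] [Algebra R C] [Algebra A B] [IsScalarTower R A B]
    [CharP R p] [CharP A p]
    (hsurj : Function.Surjective (relFrob p R A))
    (π : C →ₐ[R] B) (hπ : Function.Surjective π)
    (hb : ∀ x ∈ RingHom.ker (π : C →+* B), x ^ p = 0)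
    (ϑ₁ ϑ₂ : A →ₐ[R] C)
    (h₁ : π.comp ϑ₁ = IsScalarTower.toAlgHom R A B)
    (h₂ : π.comp ϑ₂ = IsScalarTower.toAlgHom R A B) :
    ϑ₁ = ϑ₂ := by
  have hp : p.Prime := Fact.out
  have hpC : (p : C) = 0 := by
    rw [← map_natCast (algebraMap R C) p, CharP.cast_eq_zero R p, map_zero]
  -- key: if π x = π y then x ^ p = y ^ p
  have key : ∀ x : A, ϑ₁ x ^ p = ϑ₂ x ^ p := by
    intro x
    have hd : ϑ₁ x - ϑ₂ x ∈ RingHom.ker (π : C →+* B) := by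
      have e1 : π (ϑ₁ x) = algebraMap A B x := AlgHom.congr_fun h₁ x
      have e2 : π (ϑ₂ x) = algebraMap A B x := AlgHom.congr_fun h₂ x
      simp [RingHom.mem_ker, map_sub, e1, e2]
    have : ϑ₁ x = ϑ₂ x + (ϑ₁ x - ϑ₂ x) := by ring
    rw [this, add_pow_prime_eq hp, hb _ hd, hpC]
    ring
  ext a
  obtain ⟨t, ht⟩ := hsurj a
  have main : ∀ t, ϑ₁.toRingHom.comp (relFrob p R A).toRingHom t
      = ϑ₂.toRingHom.comp (relFrob p R A).toRingHom t := by
    intro t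
    clear ht
    induction t using TensorProduct.induction_on with
    | zero => simp
    | tmul a r =>
      simp only [RingHom.coe_comp, Function.comp_apply, AlgHom.toRingHom_eq_coe,
        RingHom.coe_coe, relFrob, Algebra.TensorProduct.productMap_apply_tmul]
      show ϑ₁ (frobAlgHom p R A a * fstarAlgHom p R A r)
        = ϑ₂ (frobAlgHom p R A a * fstarAlgHom p R A r)
      show ϑ₁ (a ^ p * algebraMap R A r) = ϑ₂ (a ^ p * algebraMap R A r)
      simp only [map_mul, map_pow, AlgHom.commutes]
      rw [key]
      exact congrArg (ϑ₂ a ^ p * ·) ((ϑ₁.commutes (show R from r)).trans (ϑ₂.commutes (show R from r)).symm)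
    | add x y hx hy => simp only [map_add, hx, hy]
  have h1 : ϑ₁.toRingHom.comp (relFrob p R A).toRingHom t = ϑ₁ a := by
    show ϑ₁ (relFrob p R A t) = ϑ₁ a
    exact congrArg (fun z : A => ϑ₁ z) ht
  have h2 : ϑ₂.toRingHom.comp (relFrob p R A).toRingHom t = ϑ₂ a := by
    show ϑ₂ (relFrob p R A t) = ϑ₂ a
    exact congrArg (fun z : A => ϑ₂ z) ht
  rw [← h1, ← h2, main t]
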